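/- arXiv:1108.0327 — 5 statements merged into one kernel-verified Lean document; each statement's English description precedes it below -/
import Mathlib

section
/- Let f, f', h : ℕ → (0,∞) be monotone unbounded functions and suppose there is a constant c > 0 such that (1/c) f'(μ) ≤ f(μ) ≤ c f'(μ) for all μ ∈ ℕ. Then for the same constant c, (1/c) (f'*h)(μ) ≤ (f*h)(μ) ≤ c (f'*h)(μ) for all μ ∈ ℕ, where * denotes the monotone merge of two sequences. -/
/-- `m` is the monotone merge of `f` and `h`: a monotone enumeration of the
combined multiset of values of `f` and `h` (so `m i` is the `i`-th smallest
element of that multiset). -/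
def IsMerge (f h m : ℕ → ℝ) : Prop :=
  Monotone m ∧ ∃ e : ℕ ⊕ ℕ ≃ ℕ, ∀ i, m (e i) = Sum.elim f h i

lemma level_finite (f : ℕ → ℝ) (hmono : Monotone f) (hunbdd : ¬ BddAbove (Set.range f))
    (x : ℝ) : {i : ℕ | f i ≤ x}.Finite := by
  rw [not_bddAbove_iff] at hunbdd
  obtain ⟨y, ⟨N, rfl⟩, hy⟩ := hunbdd x
  refine (Set.finite_Iio N).subset fun i hi => ?_
  by_contra hiN
  exact absurd (hmono (le_of_not_gt hiN)) (not_le.mpr (lt_of_le_of_lt hi hy))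

lemma sum_level_finite (f h : ℕ → ℝ) (hf : Monotone f) (hfu : ¬ BddAbove (Set.range f))
    (hh : Monotone h) (hhu : ¬ BddAbove (Set.range h)) (x : ℝ) :
    {j : ℕ ⊕ ℕ | Sum.elim f h j ≤ x}.Finite := by
  have : {j : ℕ ⊕ ℕ | Sum.elim f h j ≤ x} ⊆
      (Sum.inl '' {i | f i ≤ x}) ∪ (Sum.inr '' {i | h i ≤ x}) := by
    rintro (i | i) hj
    · exact Or.inl ⟨i, hj, rfl⟩
    · exact Or.inr ⟨i, hj, rfl⟩
  exact (((level_finite f hf hfu x).image _).union ((level_finite h hh hhu x).image _)).subset this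

lemma merge_set_eq (f h m : ℕ → ℝ) (e : ℕ ⊕ ℕ ≃ ℕ) (he : ∀ i, m (e i) = Sum.elim f h i)
    (x : ℝ) : {i : ℕ | m i ≤ x} = e '' {j | Sum.elim f h j ≤ x} := by
  ext i
  constructor
  · intro hi
    refine ⟨e.symm i, ?_, e.apply_symm_apply i⟩
    have := he (e.symm i)
    rw [e.apply_symm_apply] at this
    simpa [Set.mem_setOf_eq, ← this] using hi
  · rintro ⟨j, hj, rfl⟩
    simpa [Set.mem_setOf_eq, he j] using hj

/-- Key domination lemma for merges. -/
lemma merge_dom (f h f' h' m m' : ℕ → ℝ) (hm : IsMerge f h m) (hm' : IsMerge f' h' m')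
    (hffin : ∀ x, {j : ℕ ⊕ ℕ | Sum.elim f h j ≤ x}.Finite)
    (hf'fin : ∀ x, {j : ℕ ⊕ ℕ | Sum.elim f' h' j ≤ x}.Finite)
    (c : ℝ) (hc : 0 ≤ c)
    (hdom : ∀ j : ℕ ⊕ ℕ, Sum.elim f h j ≤ c * Sum.elim f' h' j) :
    ∀ μ, m μ ≤ c * m' μ := by
  obtain ⟨hmmono, e, he⟩ := hm
  obtain ⟨hm'mono, e', he'⟩ := hm'
  intro μ
  set x := c * m' μ with hx
  -- S' : indices with value ≤ m' μ for (f', h')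
  have hS'sub : {j : ℕ ⊕ ℕ | Sum.elim f' h' j ≤ m' μ} ⊆ {j | Sum.elim f h j ≤ x} := by
    intro j hj
    exact le_trans (hdom j) (mul_le_mul_of_nonneg_left hj hc)
  -- μ + 1 ≤ ncard of S'
  have hμT' : μ ∈ {i : ℕ | m' i ≤ m' μ} := Set.mem_setOf_eq ▸ le_refl (m' μ)
  have hT'eq := merge_set_eq f' h' m' e' he' (m' μ)
  have hT'fin : {i : ℕ | m' i ≤ m' μ}.Finite := by
    rw [hT'eq]; exact (hf'fin (m' μ)).image _
  have hIic : Set.Iic μ ⊆ {i : ℕ | m' i ≤ m' μ} := fun i hi => hm'mono hi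
  have h1 : μ + 1 ≤ {i : ℕ | m' i ≤ m' μ}.ncard := by
    have := Set.ncard_le_ncard hIic hT'fin
    rwa [show (Set.Iic μ).ncard = μ + 1 by rw [Set.ncard_eq_toFinset_card']; simp] at this
  have h2 : {i : ℕ | m' i ≤ m' μ}.ncard = {j : ℕ ⊕ ℕ | Sum.elim f' h' j ≤ m' μ}.ncard := by
    rw [hT'eq, Set.ncard_image_of_injective _ e'.injective]
  have h3 : {j : ℕ ⊕ ℕ | Sum.elim f' h' j ≤ m' μ}.ncard ≤
      {j : ℕ ⊕ ℕ | Sum.elim f h j ≤ x}.ncard :=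
    Set.ncard_le_ncard hS'sub (hffin x)
  have hTeq := merge_set_eq f h m e he x
  have h4 : μ + 1 ≤ {i : ℕ | m i ≤ x}.ncard := by
    rw [hTeq, Set.ncard_image_of_injective _ e.injective]
    omega
  -- conclude μ ∈ {i | m i ≤ x}
  by_contra hmx
  have hsub : {i : ℕ | m i ≤ x} ⊆ Set.Iio μ := by
    intro i hi
    by_contra hiμ
    exact hmx (le_trans (hmmono (le_of_not_gt hiμ)) hi)
  have := Set.ncard_le_ncard hsub (Set.finite_Iio μ)
  rw [show (Set.Iio μ).ncard = μ by rw [Set.ncard_eq_toFinset_card']; simp] at this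
  omega

/-- Lemma 3.6 of the paper: if `(1/c) f' ≤ f ≤ c f'` pointwise,
then `(1/c) (f'*h) ≤ f*h ≤ c (f'*h)` pointwise, for the same constant `c`. -/
theorem stmt_2 (f f' h : ℕ → ℝ)
    (hfpos : ∀ μ, 0 < f μ) (hfmono : Monotone f) (hfunbdd : ¬ BddAbove (Set.range f))
    (hf'pos : ∀ μ, 0 < f' μ) (hf'mono : Monotone f') (hf'unbdd : ¬ BddAbove (Set.range f'))
    (hhpos : ∀ μ, 0 < h μ) (hhmono : Monotone h) (hhunbdd : ¬ BddAbove (Set.range h))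
    (c : ℝ) (hc : 0 < c)
    (hequiv : ∀ μ, (1 / c) * f' μ ≤ f μ ∧ f μ ≤ c * f' μ)
    (m m' : ℕ → ℝ) (hm : IsMerge f h m) (hm' : IsMerge f' h m') :
    ∀ μ, (1 / c) * m' μ ≤ m μ ∧ m μ ≤ c * m' μ := by
  have hc1 : 1 ≤ c := by
    by_contra hlt
    push_neg at hlt
    have h1 := (hequiv 0).1
    have h2 := (hequiv 0).2
    have := hf'pos 0
    have := hfpos 0
    rw [div_mul_eq_mul_div, one_mul, div_le_iff₀ hc] at h1
    nlinarith
  have hffin := sum_level_finite f h hfmono hfunbdd hhmono hhunbdd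
  have hf'fin := sum_level_finite f' h hf'mono hf'unbdd hhmono hhunbdd
  have hupper : ∀ μ, m μ ≤ c * m' μ := by
    refine merge_dom f h f' h m m' hm hm' hffin hf'fin c hc.le ?_
    rintro (i | i)
    · exact (hequiv i).2
    · simpa using le_mul_of_one_le_left (hhpos i).le hc1
  have hlower : ∀ μ, m' μ ≤ c * m μ := by
    refine merge_dom f' h f h m' m hm' hm hf'fin hffin c hc.le ?_
    rintro (i | i)
    · have := (hequiv i).1
      rw [div_mul_eq_mul_div, one_mul, div_le_iff₀ hc] at this
      simpa [mul_comm] using this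
    · simpa using le_mul_of_one_le_left (hhpos i).le hc1
  intro μ
  refine ⟨?_, hupper μ⟩
  have := hlower μ
  rw [div_mul_eq_mul_div, one_mul, div_le_iff₀ hc]
  linarith [this]
end

section
/- Let f₁(μ) = μ^a and f₂(μ) = μ^b with real exponents 0 < b ≤ a. Then [f₁]*[f₂] = [f₂]; that is, there is a constant c > 0 such that (1/c) μ^b ≤ (f₁*f₂)(μ) ≤ c μ^b for all μ ∈ ℕ. -/
/-- for `f₁(μ) = μ^a`, `f₂(μ) = μ^b` (0-indexed: `(μ+1)^a` etc.)
with `0 < b ≤ a`, one has `[f₁]*[f₂] = [f₂]`: the merge is comparable to `f₂`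
with a two-sided constant. -/
theorem stmt_7 (a b : ℝ) (hb : 0 < b) (hab : b ≤ a) (m : ℕ → ℝ)
    (hm : IsMerge (fun μ : ℕ => ((μ : ℝ) + 1) ^ a) (fun μ : ℕ => ((μ : ℝ) + 1) ^ b) m) :
    ∃ c > (0:ℝ), ∀ μ : ℕ,
      (1 / c) * ((μ : ℝ) + 1) ^ b ≤ m μ ∧ m μ ≤ c * ((μ : ℝ) + 1) ^ b := by
  have ha : 0 < a := lt_of_lt_of_le hb hab
  obtain ⟨hmono, e, he⟩ := hm
  -- upper bound : m μ ≤ (μ+1)^b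
  have upper : ∀ μ : ℕ, m μ ≤ ((μ : ℝ) + 1) ^ b := by
    intro μ
    have hS : ∃ j ≤ μ, μ ≤ e (Sum.inr j) := by
      by_contra h
      push_neg at h
      have hsub : (Finset.range (μ+1)).image (fun j => e (Sum.inr j)) ⊆ Finset.range μ := by
        intro x hx
        simp only [Finset.mem_image, Finset.mem_range] at hx ⊢
        obtain ⟨j, hj, rfl⟩ := hx
        exact h j (Nat.lt_succ_iff.mp hj)
      have hcard := Finset.card_le_card hsub
      rw [Finset.card_image_of_injOn
        (fun x _ y _ hxy => Sum.inr.inj (e.injective hxy))] at hcard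
      simp at hcard
    obtain ⟨j, hj, hje⟩ := hS
    calc m μ ≤ m (e (Sum.inr j)) := hmono hje
      _ = ((j : ℝ) + 1) ^ b := he _
      _ ≤ ((μ : ℝ) + 1) ^ b := by
          refine Real.rpow_le_rpow (by positivity) ?_ hb.le
          have : (j : ℝ) ≤ μ := Nat.cast_le.mpr hj
          linarith
  -- lower bound : (μ+1)^b ≤ m (2μ)
  have lower : ∀ μ : ℕ, ((μ : ℝ) + 1) ^ b ≤ m (2*μ) := by
    intro μ
    by_contra h
    push_neg at h
    have hall : ∀ i ≤ 2*μ, m i < ((μ : ℝ) + 1) ^ b := fun i hi =>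
      lt_of_le_of_lt (hmono hi) h
    have key : ∀ i ≤ 2*μ, ∀ j : ℕ,
        (e.symm i = Sum.inl j ∨ e.symm i = Sum.inr j) → j < μ := by
      intro i hi j hj
      have hmi : m i = Sum.elim (fun μ : ℕ => ((μ : ℝ) + 1) ^ a)
          (fun μ : ℕ => ((μ : ℝ) + 1) ^ b) (e.symm i) := by
        conv_lhs => rw [← e.apply_symm_apply i]
        exact he _
      by_contra hjμ
      push_neg at hjμ
      have hcast : ((μ : ℝ) + 1) ≤ (j : ℝ) + 1 := by
        have : (μ : ℝ) ≤ j := Nat.cast_le.mpr hjμ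
        linarith
      have hlt := hall i hi
      rcases hj with hj | hj
      · rw [hmi, hj] at hlt
        simp only [Sum.elim_inl] at hlt
        have h1 : ((μ : ℝ) + 1) ^ b ≤ ((μ : ℝ) + 1) ^ a :=
          Real.rpow_le_rpow_of_exponent_le (le_add_of_nonneg_left (Nat.cast_nonneg μ)) hab
        have h2 : ((μ : ℝ) + 1) ^ a ≤ ((j : ℝ) + 1) ^ a :=
          Real.rpow_le_rpow (by positivity : (0:ℝ) ≤ (μ:ℝ)+1) hcast ha.le
        linarith
      · rw [hmi, hj] at hlt
        simp only [Sum.elim_inr] at hlt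
        have h2 : ((μ : ℝ) + 1) ^ b ≤ ((j : ℝ) + 1) ^ b :=
          Real.rpow_le_rpow (by positivity : (0:ℝ) ≤ (μ:ℝ)+1) hcast hb.le
        linarith
    -- injection from range (2μ+1) into range (2μ)
    set g : ℕ → ℕ := fun i =>
      match e.symm i with
      | Sum.inl j => j
      | Sum.inr j => μ + j with hg
    have hmaps : ∀ i ∈ Finset.range (2*μ+1), g i ∈ Finset.range (2*μ) := by
      intro i hi
      simp only [Finset.mem_range] at hi ⊢
      have hi' : i ≤ 2*μ := Nat.lt_succ_iff.mp hi
      rcases hge : e.symm i with j | j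
      · have := key i hi' j (Or.inl hge)
        simp [hg, hge]; omega
      · have := key i hi' j (Or.inr hge)
        simp [hg, hge]; omega
    have hinj : ∀ i ∈ Finset.range (2*μ+1), ∀ i' ∈ Finset.range (2*μ+1),
        g i = g i' → i = i' := by
      intro i hi i' hi' hgi
      simp only [Finset.mem_range] at hi hi'
      have hi1 : i ≤ 2*μ := Nat.lt_succ_iff.mp hi
      have hi2 : i' ≤ 2*μ := Nat.lt_succ_iff.mp hi'
      have heq : e.symm i = e.symm i' := by
        rcases h1 : e.symm i with j | j <;> rcases h2 : e.symm i' with j' | j'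
        · simp only [hg, h1, h2] at hgi; rw [hgi]
        · have := key i hi1 j (Or.inl h1)
          have := key i' hi2 j' (Or.inr h2)
          simp only [hg, h1, h2] at hgi; omega
        · have := key i hi1 j (Or.inr h1)
          have := key i' hi2 j' (Or.inl h2)
          simp only [hg, h1, h2] at hgi; omega
        · simp only [hg, h1, h2] at hgi
          rw [show j = j' by omega]
      exact e.symm.injective heq
    have hcard := Finset.card_le_card_of_injOn g hmaps hinj
    simp only [Finset.card_range] at hcard
    omega
  -- conclusion with c = 2^b
  refine ⟨(2:ℝ) ^ b, Real.rpow_pos_of_pos (by norm_num) b, fun μ => ?_⟩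
  have h2b : (1:ℝ) ≤ (2:ℝ) ^ b := by
    have := Real.rpow_le_rpow (by norm_num : (0:ℝ) ≤ 1) (by norm_num : (1:ℝ) ≤ 2) hb.le
    simpa [Real.one_rpow] using this
  have hpos : (0:ℝ) < ((μ : ℝ) + 1) ^ b := by positivity
  constructor
  · -- lower
    have hk : 2 * (μ / 2) ≤ μ := by omega
    have h1 : m (2 * (μ/2)) ≤ m μ := hmono hk
    have h2 := lower (μ/2)
    have hhalf : ((μ : ℝ) + 1) / 2 ≤ ((μ/2 : ℕ) : ℝ) + 1 := by
      have : (μ : ℝ) ≤ 2 * ((μ/2 : ℕ) : ℝ) + 1 := by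
        have : μ ≤ 2 * (μ/2) + 1 := by omega
        exact_mod_cast this
      linarith
    have h3 : (((μ : ℝ) + 1) / 2) ^ b ≤ (((μ/2 : ℕ) : ℝ) + 1) ^ b :=
      Real.rpow_le_rpow (by positivity) hhalf hb.le
    have h4 : (((μ : ℝ) + 1) / 2) ^ b = ((μ : ℝ) + 1) ^ b / (2:ℝ) ^ b :=
      Real.div_rpow (by positivity) (by norm_num) b
    have : ((μ : ℝ) + 1) ^ b / (2:ℝ) ^ b ≤ m μ := by
      rw [← h4]; linarith
    calc (1 / (2:ℝ)^b) * ((μ : ℝ) + 1) ^ b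
        = ((μ : ℝ) + 1) ^ b / (2:ℝ) ^ b := by ring
      _ ≤ m μ := this
  · -- upper
    calc m μ ≤ ((μ : ℝ) + 1) ^ b := upper μ
      _ = 1 * ((μ : ℝ) + 1) ^ b := by ring
      _ ≤ (2:ℝ) ^ b * ((μ : ℝ) + 1) ^ b :=
          mul_le_mul_of_nonneg_right h2b hpos.le
end

section
/- Let f₁, f₂ : ℕ → (0,∞) be monotone unbounded. Then the level-wise direct sum scale Hilbert space ℓ^{2,f₁} ⊕ ℓ^{2,f₂} (with k-th level ℓ²_{f₁^k} ⊕ ℓ²_{f₂^k}) is scale isomorphic to ℓ^{2,f₁*f₂}, where f₁*f₂ is the monotone merge of f₁ and f₂. In particular, a product of fractal scale Hilbert spaces is fractal. -/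

lemma hasSum_of_sum_elim {g : ℕ ⊕ ℕ → ℝ} {a b : ℝ}
    (ha : HasSum (g ∘ Sum.inl) a) (hb : HasSum (g ∘ Sum.inr) b) : HasSum g (a + b) := by
  have h1 : HasSum (g ∘ ((↑) : Set.range (Sum.inl : ℕ → ℕ ⊕ ℕ) → ℕ ⊕ ℕ)) a :=
    ((Equiv.ofInjective Sum.inl Sum.inl_injective).hasSum_iff).mp ha
  have h2 : HasSum (g ∘ ((↑) : Set.range (Sum.inr : ℕ → ℕ ⊕ ℕ) → ℕ ⊕ ℕ)) b :=
    ((Equiv.ofInjective Sum.inr Sum.inr_injective).hasSum_iff).mp hb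
  exact HasSum.add_isCompl Set.isCompl_range_inl_range_inr h1 h2

/-- `ℓ^{2,f₁} ⊕ ℓ^{2,f₂}` is scale isomorphic to `ℓ^{2,f₁*f₂}`:
there is an interleaving bijection `σ : ℕ ⊕ ℕ ≃ ℕ` matching the weights, such
that on every level `k` the pair `(x,y)` lies in `ℓ²_{f₁^k} ⊕ ℓ²_{f₂^k}` iff
the interleaved sequence `z = Sum.elim x y ∘ σ.symm` lies in `ℓ²_{(f₁*f₂)^k}`,
with equal norms. In particular a product of fractal scale Hilbert spaces is
fractal. -/
theorem stmt_13 (f₁ f₂ : ℕ → ℝ)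
    (hf₁pos : ∀ μ, 0 < f₁ μ) (hf₁mono : Monotone f₁) (hf₁unbdd : ¬ BddAbove (Set.range f₁))
    (hf₂pos : ∀ μ, 0 < f₂ μ) (hf₂mono : Monotone f₂) (hf₂unbdd : ¬ BddAbove (Set.range f₂))
    (m : ℕ → ℝ) (hm : IsMerge f₁ f₂ m) :
    ∃ σ : ℕ ⊕ ℕ ≃ ℕ, (∀ i, m (σ i) = Sum.elim f₁ f₂ i) ∧
      ∀ (k : ℕ) (x y : ℕ → ℝ),
        ((Summable (fun μ => f₁ μ ^ k * x μ ^ 2) ∧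
            Summable (fun μ => f₂ μ ^ k * y μ ^ 2)) ↔
          Summable (fun μ => m μ ^ k * (Sum.elim x y (σ.symm μ)) ^ 2)) ∧
        (Summable (fun μ => f₁ μ ^ k * x μ ^ 2) →
          Summable (fun μ => f₂ μ ^ k * y μ ^ 2) →
          (∑' μ, m μ ^ k * (Sum.elim x y (σ.symm μ)) ^ 2) =
            (∑' μ, f₁ μ ^ k * x μ ^ 2) + (∑' μ, f₂ μ ^ k * y μ ^ 2)) := by
  obtain ⟨hmono, e, he⟩ := hm
  refine ⟨e, he, fun k x y => ?_⟩
  set g : ℕ ⊕ ℕ → ℝ := fun i => (Sum.elim f₁ f₂ i) ^ k * (Sum.elim x y i) ^ 2 with hg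
  have hkey : (fun μ => m μ ^ k * (Sum.elim x y (e.symm μ)) ^ 2) = g ∘ e.symm := by
    funext μ
    have : m μ = Sum.elim f₁ f₂ (e.symm μ) := by
      conv_lhs => rw [← e.apply_symm_apply μ]
      exact he _
    simp [hg, this]
  have hinl : (g ∘ Sum.inl) = fun μ => f₁ μ ^ k * x μ ^ 2 := rfl
  have hinr : (g ∘ Sum.inr) = fun μ => f₂ μ ^ k * y μ ^ 2 := rfl
  constructor
  · rw [hkey, e.symm.summable_iff]
    constructor
    · rintro ⟨h1, h2⟩
      rw [← hinl] at h1; rw [← hinr] at h2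
      exact (hasSum_of_sum_elim h1.hasSum h2.hasSum).summable
    · intro h
      exact ⟨hinl ▸ h.comp_injective Sum.inl_injective,
        hinr ▸ h.comp_injective Sum.inr_injective⟩
  · intro h1 h2
    rw [← hinl] at h1; rw [← hinr] at h2
    have := hasSum_of_sum_elim h1.hasSum h2.hasSum
    rw [hkey, Function.comp_def, e.symm.tsum_eq, this.tsum_eq, h1.hasSum.tsum_eq, h2.hasSum.tsum_eq]
    rw [hinl, hinr]
end

section
/- Let a ≥ b > 0 be real exponents and let f₁(μ) = μ^a, f₂(μ) = μ^b. Then ℓ^{2,f₁} ⊕ ℓ^{2,f₂} is scale isomorphic to ℓ^{2,f₂}; i.e., the direct sum of the weighted-sequence scale Hilbert spaces with polynomial weights μ^a and μ^b (a ≥ b) is scale isomorphic to the one with the smaller exponent. -/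
noncomputable def sseq (r : ℝ) (μ : ℕ) : ℕ := 2 * ⌈((μ : ℝ) + 1) ^ r⌉₊ + 1

lemma one_le_A (r : ℝ) (hr : 1 ≤ r) (μ : ℕ) : 1 ≤ ((μ : ℝ) + 1) ^ r :=
  Real.one_le_rpow (by norm_num [Nat.cast_nonneg] : (1:ℝ) ≤ (μ : ℝ) + 1) (by linarith)

/-- gap lemma: `(t+1)^r ≥ t^r + 1` for `t ≥ 1`, `r ≥ 1`. -/
lemma gap (r : ℝ) (hr : 1 ≤ r) (t : ℝ) (ht : 1 ≤ t) : t ^ r + 1 ≤ (t + 1) ^ r := by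
  have ht0 : 0 < t := by linarith
  have h1 : (1 : ℝ) ≤ (t + 1) / t := by
    rw [le_div_iff₀ ht0]; linarith
  have h2 : (t + 1) / t ≤ ((t + 1) / t) ^ r := by
    calc (t + 1) / t = ((t + 1) / t) ^ (1 : ℝ) := (Real.rpow_one _).symm
    _ ≤ ((t + 1) / t) ^ r := Real.rpow_le_rpow_of_exponent_le h1 hr
  have h3 : (t + 1) ^ r = t ^ r * ((t + 1) / t) ^ r := by
    rw [← Real.mul_rpow (le_of_lt ht0) (by positivity)]
    congr 1
    field_simp
  have h4 : (1 : ℝ) ≤ t ^ (r - 1) := Real.one_le_rpow ht (by linarith)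
  have h5 : t ^ r = t ^ (r - 1) * t := by
    rw [← Real.rpow_add_one (ne_of_gt ht0)]; ring_nf
  have h6 : t ^ r * ((t + 1) / t) = t ^ (r - 1) * (t + 1) := by
    rw [h5]; field_simp
  have h7 : t ^ r * ((t + 1) / t) ≤ t ^ r * ((t + 1) / t) ^ r := by
    apply mul_le_mul_of_nonneg_left h2 (by positivity)
  nlinarith [h4, h5, h6, h7, h3]

lemma sseq_strictMono (r : ℝ) (hr : 1 ≤ r) : StrictMono (sseq r) := by
  apply strictMono_nat_of_lt_succ
  intro μ
  unfold sseq
  have key : ((μ : ℝ) + 1) ^ r + 1 ≤ (((μ + 1 : ℕ) : ℝ) + 1) ^ r := by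
    push_cast
    have := gap r hr ((μ : ℝ) + 1) (by norm_num [Nat.cast_nonneg])
    convert this using 2
  have h : ⌈((μ : ℝ) + 1) ^ r⌉₊ < ⌈(((μ + 1 : ℕ) : ℝ) + 1) ^ r⌉₊ := by
    have h1 : (⌈((μ : ℝ) + 1) ^ r⌉₊ : ℝ) < (((μ + 1 : ℕ) : ℝ) + 1) ^ r := by
      have := Nat.ceil_lt_add_one (le_of_lt (lt_of_lt_of_le one_pos (one_le_A r hr μ)))
      linarith
    exact_mod_cast lt_of_lt_of_le h1 (Nat.le_ceil _)
  omega

lemma sseq_odd (r : ℝ) (μ : ℕ) : sseq r μ % 2 = 1 := by unfold sseq; omega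

lemma sseq_bounds (r : ℝ) (hr : 1 ≤ r) (μ : ℕ) :
    ((μ : ℝ) + 1) ^ r ≤ (sseq r μ : ℝ) + 1 ∧ (sseq r μ : ℝ) + 1 ≤ 6 * ((μ : ℝ) + 1) ^ r := by
  have hA := one_le_A r hr μ
  have hle : ((μ : ℝ) + 1) ^ r ≤ (⌈((μ : ℝ) + 1) ^ r⌉₊ : ℝ) := Nat.le_ceil _
  have hlt : (⌈((μ : ℝ) + 1) ^ r⌉₊ : ℝ) < ((μ : ℝ) + 1) ^ r + 1 :=
    Nat.ceil_lt_add_one (by linarith)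
  unfold sseq
  push_cast
  constructor <;> nlinarith

def Tpred (r : ℝ) : ℕ → Prop := fun n => n ∉ Set.range (sseq r)

lemma even_mem_T (r : ℝ) (i : ℕ) : Tpred r (2 * i) := by
  rintro ⟨μ, hμ⟩
  have := sseq_odd r μ
  omega

lemma T_infinite (r : ℝ) : (setOf (Tpred r)).Infinite :=
  Set.infinite_of_injective_forall_mem (f := fun i : ℕ => 2 * i)
    (fun i j h => by simpa using h) (fun i => even_mem_T r i)

noncomputable def eT (r : ℝ) (μ : ℕ) : ℕ := Nat.nth (Tpred r) μ

lemma eT_mem (r : ℝ) (μ : ℕ) : Tpred r (eT r μ) := Nat.nth_mem_of_infinite (T_infinite r) μ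

lemma eT_inj (r : ℝ) : Function.Injective (eT r) := Nat.nth_injective (T_infinite r)

lemma le_eT (r : ℝ) (μ : ℕ) : μ ≤ eT r μ := (Nat.nth_strictMono (T_infinite r)).le_apply

lemma eT_le (r : ℝ) (μ : ℕ) : eT r μ ≤ 2 * μ := by
  classical
  have hcount : μ < Nat.count (Tpred r) (2 * μ + 1) := by
    have hsub : μ + 1 ≤ Nat.count (Tpred r) (2 * μ + 1) := by
      rw [Nat.count_eq_card_filter_range]
      have : (Finset.range (μ + 1)).card ≤
          ((Finset.range (2 * μ + 1)).filter (Tpred r)).card := by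
        apply Finset.card_le_card_of_injOn (fun i => 2 * i)
        · intro i hi
          simp only [Finset.mem_coe, Finset.mem_range] at hi
          simp only [Finset.mem_coe, Finset.mem_filter, Finset.mem_range]
          exact ⟨by omega, even_mem_T r i⟩
        · intro i _ j _ h; simpa using h
      simpa using this
    omega
  have := Nat.nth_lt_of_lt_count hcount
  unfold eT
  omega

open Classical in
noncomputable def PhiFun (r : ℝ) (p : (ℕ → ℝ) × (ℕ → ℝ)) (n : ℕ) : ℝ :=
  if n ∈ Set.range (sseq r) then p.1 (Function.invFun (sseq r) n)
  else p.2 (Function.invFun (eT r) n)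

noncomputable def PhiMap (r : ℝ) : ((ℕ → ℝ) × (ℕ → ℝ)) →ₗ[ℝ] (ℕ → ℝ) where
  toFun := PhiFun r
  map_add' p q := by
    classical
    funext n
    simp only [PhiFun, Prod.fst_add, Prod.snd_add, Pi.add_apply]
    split_ifs <;> simp
  map_smul' c p := by
    classical
    funext n
    simp only [PhiFun, Prod.smul_fst, Prod.smul_snd, Pi.smul_apply, RingHom.id_apply,
      smul_eq_mul]
    split_ifs <;> simp

lemma Phi_apply_s (r : ℝ) (hs : Function.Injective (sseq r))
    (p : (ℕ → ℝ) × (ℕ → ℝ)) (μ : ℕ) : PhiFun r p (sseq r μ) = p.1 μ := by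
  unfold PhiFun
  rw [if_pos ⟨μ, rfl⟩, Function.leftInverse_invFun hs μ]

lemma Phi_apply_t (r : ℝ)
    (p : (ℕ → ℝ) × (ℕ → ℝ)) (μ : ℕ) : PhiFun r p (eT r μ) = p.2 μ := by
  unfold PhiFun
  rw [if_neg (eT_mem r μ), Function.leftInverse_invFun (eT_inj r) μ]

lemma Phi_bijective (r : ℝ) (hs : Function.Injective (sseq r)) :
    Function.Bijective (PhiMap r) := by
  rw [Function.bijective_iff_has_inverse]
  refine ⟨fun z => (z ∘ sseq r, z ∘ eT r), fun p => ?_, fun z => ?_⟩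
  · ext μ
    · exact Phi_apply_s r hs p μ
    · exact Phi_apply_t r p μ
  · funext n
    show PhiFun r _ n = z n
    unfold PhiFun
    split_ifs with h
    · obtain ⟨μ, rfl⟩ := h
      rw [Function.leftInverse_invFun hs μ]; rfl
    · have hn : n ∈ Set.range (eT r) := by
        unfold eT
        rw [Nat.range_nth_of_infinite (T_infinite r)]
        exact h
      obtain ⟨μ, rfl⟩ := hn
      rw [Function.leftInverse_invFun (eT_inj r) μ]; rfl

noncomputable def eCompl (r : ℝ) :
    ℕ ≃ ↥((Set.range (sseq r))ᶜ) :=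
  Equiv.ofBijective (fun μ => ⟨eT r μ, eT_mem r μ⟩)
    ⟨fun i j h => eT_inj r (by simpa using congrArg Subtype.val h),
     fun ⟨n, hn⟩ => by
      have : n ∈ Set.range (eT r) := by
        unfold eT; rw [Nat.range_nth_of_infinite (T_infinite r)]; exact hn
      obtain ⟨μ, hμ⟩ := this
      exact ⟨μ, Subtype.ext hμ⟩⟩

lemma split_summable (r : ℝ) (hs : Function.Injective (sseq r)) (g : ℕ → ℝ) :
    Summable g ↔ (Summable (g ∘ sseq r) ∧ Summable (g ∘ eT r)) := by
  rw [← summable_subtype_and_compl (s := Set.range (sseq r))]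
  constructor
  · rintro ⟨h1, h2⟩
    constructor
    · exact ((Equiv.ofInjective (sseq r) hs).summable_iff (f := fun x : ↥(Set.range (sseq r)) => g x)).2 h1
    · exact ((eCompl r).summable_iff (f := fun x : ↥((Set.range (sseq r))ᶜ) => g x)).2 h2
  · rintro ⟨h1, h2⟩
    constructor
    · exact ((Equiv.ofInjective (sseq r) hs).summable_iff (f := fun x : ↥(Set.range (sseq r)) => g x)).1 h1
    · exact ((eCompl r).summable_iff (f := fun x : ↥((Set.range (sseq r))ᶜ) => g x)).1 h2

lemma split_tsum (r : ℝ) (hs : Function.Injective (sseq r)) (g : ℕ → ℝ)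
    (h1 : Summable (g ∘ sseq r)) (h2 : Summable (g ∘ eT r)) :
    ∑' n, g n = (∑' μ, g (sseq r μ)) + ∑' μ, g (eT r μ) := by
  have hS : Summable (fun x : ↥(Set.range (sseq r)) => g x) :=
    ((Equiv.ofInjective (sseq r) hs).summable_iff (f := fun x : ↥(Set.range (sseq r)) => g x)).1 h1
  have hC : Summable (fun x : ↥((Set.range (sseq r))ᶜ) => g x) :=
    ((eCompl r).summable_iff (f := fun x : ↥((Set.range (sseq r))ᶜ) => g x)).1 h2
  rw [← Summable.tsum_add_tsum_compl (s := Set.range (sseq r)) hS hC]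
  congr 1
  · exact ((Equiv.ofInjective (sseq r) hs).tsum_eq (fun x : ↥(Set.range (sseq r)) => g x)).symm
  · exact ((eCompl r).tsum_eq (fun x : ↥((Set.range (sseq r))ᶜ) => g x)).symm

/-- sequence-space form of Theorem B: for `a ≥ b > 0` and the
polynomial weights `f₁(μ) = μ^a`, `f₂(μ) = μ^b` (0-indexed as `(μ+1)^a` etc.),
the direct sum `ℓ^{2,f₁} ⊕ ℓ^{2,f₂}` is scale isomorphic to `ℓ^{2,f₂}`: there
is a linear bijection of sequence pairs to sequences which, on every level
`k`, identifies the summability conditions and is bounded with bounded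
inverse in the weighted norms. -/
theorem stmt_14 (a b : ℝ) (hb : 0 < b) (hab : b ≤ a) :
    ∃ Φ : ((ℕ → ℝ) × (ℕ → ℝ)) →ₗ[ℝ] (ℕ → ℝ), Function.Bijective Φ ∧
      ∀ k : ℕ, ∃ c > (0:ℝ), ∀ x y : ℕ → ℝ,
        ((Summable (fun μ : ℕ => (((μ : ℝ) + 1) ^ a) ^ k * x μ ^ 2) ∧
            Summable (fun μ : ℕ => (((μ : ℝ) + 1) ^ b) ^ k * y μ ^ 2)) ↔
          Summable (fun μ : ℕ => (((μ : ℝ) + 1) ^ b) ^ k * (Φ (x, y)) μ ^ 2)) ∧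
        (Summable (fun μ : ℕ => (((μ : ℝ) + 1) ^ a) ^ k * x μ ^ 2) →
          Summable (fun μ : ℕ => (((μ : ℝ) + 1) ^ b) ^ k * y μ ^ 2) →
          (1 / c) * ((∑' μ : ℕ, (((μ : ℝ) + 1) ^ a) ^ k * x μ ^ 2) +
              (∑' μ : ℕ, (((μ : ℝ) + 1) ^ b) ^ k * y μ ^ 2)) ≤
            (∑' μ : ℕ, (((μ : ℝ) + 1) ^ b) ^ k * (Φ (x, y)) μ ^ 2) ∧
          (∑' μ : ℕ, (((μ : ℝ) + 1) ^ b) ^ k * (Φ (x, y)) μ ^ 2) ≤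
            c * ((∑' μ : ℕ, (((μ : ℝ) + 1) ^ a) ^ k * x μ ^ 2) +
              (∑' μ : ℕ, (((μ : ℝ) + 1) ^ b) ^ k * y μ ^ 2))) := by
  set r := a / b with hrdef
  have hr : 1 ≤ r := (one_le_div hb).2 hab
  have hrb : r * b = a := div_mul_cancel₀ a hb.ne'
  have hs : Function.Injective (sseq r) := (sseq_strictMono r hr).injective
  refine ⟨PhiMap r, Phi_bijective r hs, ?_⟩
  intro k
  -- weight comparison: sseq side
  have hWs : ∀ μ : ℕ, ((μ : ℝ) + 1) ^ a ≤ ((sseq r μ : ℝ) + 1) ^ b ∧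
      ((sseq r μ : ℝ) + 1) ^ b ≤ (6 : ℝ) ^ b * ((μ : ℝ) + 1) ^ a := by
    intro μ
    obtain ⟨hL, hU⟩ := sseq_bounds r hr μ
    have hA1 : (1 : ℝ) ≤ ((μ : ℝ) + 1) ^ r := one_le_A r hr μ
    have hA0 : (0 : ℝ) ≤ ((μ : ℝ) + 1) ^ r := by linarith
    have hx0 : (0 : ℝ) ≤ (μ : ℝ) + 1 := by positivity
    have key : (((μ : ℝ) + 1) ^ r) ^ b = ((μ : ℝ) + 1) ^ a := by
      rw [← Real.rpow_mul hx0, hrb]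
    constructor
    · rw [← key]
      exact Real.rpow_le_rpow hA0 hL hb.le
    · calc ((sseq r μ : ℝ) + 1) ^ b ≤ (6 * ((μ : ℝ) + 1) ^ r) ^ b :=
            Real.rpow_le_rpow (by positivity) hU hb.le
        _ = (6 : ℝ) ^ b * (((μ : ℝ) + 1) ^ r) ^ b := Real.mul_rpow (by norm_num) hA0
        _ = (6 : ℝ) ^ b * ((μ : ℝ) + 1) ^ a := by rw [key]
  -- weight comparison: eT side
  have hWt : ∀ μ : ℕ, ((μ : ℝ) + 1) ^ b ≤ ((eT r μ : ℝ) + 1) ^ b ∧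
      ((eT r μ : ℝ) + 1) ^ b ≤ (2 : ℝ) ^ b * ((μ : ℝ) + 1) ^ b := by
    intro μ
    have h1 : ((μ : ℝ) + 1) ≤ (eT r μ : ℝ) + 1 := by
      have := le_eT r μ; exact_mod_cast by exact_mod_cast add_le_add_left (Nat.cast_le.2 this) 1
    have h2 : ((eT r μ : ℝ) + 1) ≤ 2 * ((μ : ℝ) + 1) := by
      have := eT_le r μ
      have : (eT r μ : ℝ) ≤ 2 * (μ : ℝ) := by exact_mod_cast this
      linarith
    have hx0 : (0 : ℝ) ≤ (μ : ℝ) + 1 := by positivity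
    constructor
    · exact Real.rpow_le_rpow hx0 h1 hb.le
    · calc ((eT r μ : ℝ) + 1) ^ b ≤ (2 * ((μ : ℝ) + 1)) ^ b :=
            Real.rpow_le_rpow (by positivity) h2 hb.le
        _ = (2 : ℝ) ^ b * ((μ : ℝ) + 1) ^ b := Real.mul_rpow (by norm_num) hx0
  -- the level constant
  have h6 : (1 : ℝ) ≤ (6 : ℝ) ^ b := Real.one_le_rpow (by norm_num) hb.le
  have h26 : (2 : ℝ) ^ b ≤ (6 : ℝ) ^ b :=
    Real.rpow_le_rpow (by norm_num) (by norm_num) hb.le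
  have h20 : (0 : ℝ) ≤ (2 : ℝ) ^ b := by positivity
  set c : ℝ := ((6 : ℝ) ^ b) ^ k with hcdef
  have hc1 : 1 ≤ c := one_le_pow₀ h6
  have hc0 : (0 : ℝ) < c := by linarith
  refine ⟨c, hc0, ?_⟩
  intro x y
  set g : ℕ → ℝ := fun n => (((n : ℝ) + 1) ^ b) ^ k * ((PhiMap r) (x, y)) n ^ 2 with hgdef
  have hgs_eval : ∀ μ, g (sseq r μ) = (((sseq r μ : ℝ) + 1) ^ b) ^ k * x μ ^ 2 := by
    intro μ
    have h1 : ((PhiMap r) (x, y)) (sseq r μ) = x μ := Phi_apply_s r hs (x, y) μ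
    show (((sseq r μ : ℝ) + 1) ^ b) ^ k * ((PhiMap r) (x, y)) (sseq r μ) ^ 2 = _
    rw [h1]
  have hgt_eval : ∀ μ, g (eT r μ) = (((eT r μ : ℝ) + 1) ^ b) ^ k * y μ ^ 2 := by
    intro μ
    have h1 : ((PhiMap r) (x, y)) (eT r μ) = y μ := Phi_apply_t r (x, y) μ
    show (((eT r μ : ℝ) + 1) ^ b) ^ k * ((PhiMap r) (x, y)) (eT r μ) ^ 2 = _
    rw [h1]
  set Fx : ℕ → ℝ := fun μ => (((μ : ℝ) + 1) ^ a) ^ k * x μ ^ 2 with hFxdef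
  set Fy : ℕ → ℝ := fun μ => (((μ : ℝ) + 1) ^ b) ^ k * y μ ^ 2 with hFydef
  have hFx0 : ∀ μ, 0 ≤ Fx μ := fun μ => by simp only [hFxdef]; positivity
  have hFy0 : ∀ μ, 0 ≤ Fy μ := fun μ => by simp only [hFydef]; positivity
  have hgs0 : ∀ μ, 0 ≤ g (sseq r μ) := fun μ => by rw [hgs_eval μ]; positivity
  have hgt0 : ∀ μ, 0 ≤ g (eT r μ) := fun μ => by rw [hgt_eval μ]; positivity
  -- termwise bounds
  have t_lowS : ∀ μ, Fx μ ≤ g (sseq r μ) := by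
    intro μ
    rw [hgs_eval μ]
    apply mul_le_mul_of_nonneg_right _ (sq_nonneg _)
    exact pow_le_pow_left₀ (by positivity) (hWs μ).1 k
  have t_upS : ∀ μ, g (sseq r μ) ≤ c * Fx μ := by
    intro μ
    have e1 : c * Fx μ = ((6 : ℝ) ^ b * ((μ : ℝ) + 1) ^ a) ^ k * x μ ^ 2 := by
      simp only [hFxdef, hcdef, mul_pow]; ring
    rw [hgs_eval μ, e1]
    exact mul_le_mul_of_nonneg_right
      (pow_le_pow_left₀ (by positivity) (hWs μ).2 k) (sq_nonneg _)
  have t_lowT : ∀ μ, Fy μ ≤ g (eT r μ) := by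
    intro μ
    rw [hgt_eval μ]
    apply mul_le_mul_of_nonneg_right _ (sq_nonneg _)
    exact pow_le_pow_left₀ (by positivity) (hWt μ).1 k
  have t_upT : ∀ μ, g (eT r μ) ≤ c * Fy μ := by
    intro μ
    have e1 : c * Fy μ = ((6 : ℝ) ^ b) ^ k * ((((μ : ℝ) + 1) ^ b) ^ k * y μ ^ 2) := by
      simp only [hFydef, hcdef]
    rw [hgt_eval μ, e1]
    calc (((eT r μ : ℝ) + 1) ^ b) ^ k * y μ ^ 2
        ≤ ((2 : ℝ) ^ b * ((μ : ℝ) + 1) ^ b) ^ k * y μ ^ 2 :=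
          mul_le_mul_of_nonneg_right (pow_le_pow_left₀ (by positivity) (hWt μ).2 k)
            (sq_nonneg _)
      _ = ((2 : ℝ) ^ b) ^ k * ((((μ : ℝ) + 1) ^ b) ^ k * y μ ^ 2) := by
          rw [mul_pow]; ring
      _ ≤ ((6 : ℝ) ^ b) ^ k * ((((μ : ℝ) + 1) ^ b) ^ k * y μ ^ 2) :=
          mul_le_mul_of_nonneg_right (pow_le_pow_left₀ h20 h26 k) (by positivity)
  -- summability equivalences
  have sumS_iff : Summable (g ∘ sseq r) ↔ Summable Fx := by
    constructor
    · intro h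
      exact Summable.of_nonneg_of_le hFx0 t_lowS h
    · intro h
      exact Summable.of_nonneg_of_le hgs0 t_upS (h.mul_left c)
  have sumT_iff : Summable (g ∘ eT r) ↔ Summable Fy := by
    constructor
    · intro h
      exact Summable.of_nonneg_of_le hFy0 t_lowT h
    · intro h
      exact Summable.of_nonneg_of_le hgt0 t_upT (h.mul_left c)
  constructor
  · rw [split_summable r hs g]
    rw [sumS_iff, sumT_iff]
  · intro hx hy
    have hgs : Summable (g ∘ sseq r) := sumS_iff.2 hx
    have hgt : Summable (g ∘ eT r) := sumT_iff.2 hy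
    have H : ∑' n, g n = (∑' μ, g (sseq r μ)) + ∑' μ, g (eT r μ) :=
      split_tsum r hs g hgs hgt
    have B1 : ∑' μ, Fx μ ≤ ∑' μ, g (sseq r μ) := Summable.tsum_le_tsum t_lowS hx hgs
    have B2 : ∑' μ, g (sseq r μ) ≤ c * ∑' μ, Fx μ := by
      calc ∑' μ, g (sseq r μ) ≤ ∑' μ, c * Fx μ := Summable.tsum_le_tsum t_upS hgs (hx.mul_left c)
        _ = c * ∑' μ, Fx μ := tsum_mul_left
    have B3 : ∑' μ, Fy μ ≤ ∑' μ, g (eT r μ) := Summable.tsum_le_tsum t_lowT hy hgt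
    have B4 : ∑' μ, g (eT r μ) ≤ c * ∑' μ, Fy μ := by
      calc ∑' μ, g (eT r μ) ≤ ∑' μ, c * Fy μ := Summable.tsum_le_tsum t_upT hgt (hy.mul_left c)
        _ = c * ∑' μ, Fy μ := tsum_mul_left
    have hSx0 : 0 ≤ ∑' μ, Fx μ := tsum_nonneg hFx0
    have hSy0 : 0 ≤ ∑' μ, Fy μ := tsum_nonneg hFy0
    have hcinv : 1 / c ≤ 1 := by
      rw [div_le_one hc0]; exact hc1
    constructor
    · calc (1 / c) * ((∑' μ, Fx μ) + ∑' μ, Fy μ) ≤ 1 * ((∑' μ, Fx μ) + ∑' μ, Fy μ) :=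
            mul_le_mul_of_nonneg_right hcinv (by linarith)
        _ = (∑' μ, Fx μ) + ∑' μ, Fy μ := one_mul _
        _ ≤ ∑' n, g n := by rw [H]; linarith
    · calc ∑' n, g n ≤ c * (∑' μ, Fx μ) + c * (∑' μ, Fy μ) := by rw [H]; linarith
        _ = c * ((∑' μ, Fx μ) + ∑' μ, Fy μ) := by ring
end

section
/- Let (λ_μ) be a nondecreasing unbounded sequence with λ_μ ≥ 1, let (φ_μ) be orthonormal in a Hilbert space, and for k ∈ ℕ₀ let H_k be the completion of finite linear combinations of the φ_μ with respect to ⟨u,v⟩_k where φ_μ has ⟨φ_μ,φ_μ⟩_k = ∑_{j=0}^{k} λ_μ^{j}. Then the map Φ sending ψ to the sequence ( ⟨ψ,φ_μ⟩_{k₀} / (∑_{j=0}^{k₀} λ_μ^j)^{1/2} )_μ is a scale isomorphism from the scale Hilbert space (H_{k+k₀})_{k∈ℕ₀} to ℓ^{2,f} with f(μ) = λ_μ, for any fixed k₀ ∈ ℕ. -/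
/-- coefficient form of Theorem 3.1: let `(λ_μ)` be
nondecreasing, `≥ 1` and unbounded. The abstract space `H_k` (completion of
the span of an orthonormal-in-`H₀` family `(φ_μ)` for the inner product in
which `⟨φ_μ,φ_μ⟩_k = ∑_{j=0}^k λ_μ^j`) is isometrically the weighted sequence
space with weight `w_k(μ) = ∑_{j=0}^k λ_μ^j` acting on coefficient sequences
`c`. The map `Φ` sending `ψ` (with coefficients `c`) to
`(⟨ψ,φ_μ⟩_{k₀} / w_{k₀}(μ)^{1/2})_μ = (w_{k₀}(μ)^{1/2} c_μ)_μ` is a scale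
isomorphism from `(H_{k+k₀})_{k}` to `ℓ^{2,f}` with `f(μ) = λ_μ`: on every
level `k` the summability conditions for `ψ ∈ H_{k+k₀}` and `Φψ ∈ ℓ²_{λ^k}`
agree, and the norms are two-sidedly comparable. -/
theorem stmt_19 (lam : ℕ → ℝ) (hmono : Monotone lam) (h1 : ∀ μ, 1 ≤ lam μ)
    (hunbdd : ¬ BddAbove (Set.range lam)) (k₀ : ℕ) (hk₀ : 1 ≤ k₀) :
    ∀ k : ℕ, ∃ c > (0:ℝ), ∀ cseq : ℕ → ℝ,
      ((Summable (fun μ => (∑ j ∈ Finset.range (k + k₀ + 1), lam μ ^ j) * cseq μ ^ 2)) ↔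
        Summable (fun μ => lam μ ^ k *
          (Real.sqrt (∑ j ∈ Finset.range (k₀ + 1), lam μ ^ j) * cseq μ) ^ 2)) ∧
      (Summable (fun μ => (∑ j ∈ Finset.range (k + k₀ + 1), lam μ ^ j) * cseq μ ^ 2) →
        (1 / c) * (∑' μ, (∑ j ∈ Finset.range (k + k₀ + 1), lam μ ^ j) * cseq μ ^ 2) ≤
            (∑' μ, lam μ ^ k *
              (Real.sqrt (∑ j ∈ Finset.range (k₀ + 1), lam μ ^ j) * cseq μ) ^ 2) ∧
        (∑' μ, lam μ ^ k *
            (Real.sqrt (∑ j ∈ Finset.range (k₀ + 1), lam μ ^ j) * cseq μ) ^ 2) ≤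
          c * (∑' μ, (∑ j ∈ Finset.range (k + k₀ + 1), lam μ ^ j) * cseq μ ^ 2)) := by
  intro k
  refine ⟨((k + k₀ + 1 : ℕ) : ℝ), by positivity, fun cseq => ?_⟩
  set C : ℝ := ((k + k₀ + 1 : ℕ) : ℝ) with hCdef
  have hC : (0:ℝ) < C := by positivity
  set A : ℕ → ℝ := fun μ => (∑ j ∈ Finset.range (k + k₀ + 1), lam μ ^ j) * cseq μ ^ 2 with hA
  set B : ℕ → ℝ := fun μ => lam μ ^ k *
      (Real.sqrt (∑ j ∈ Finset.range (k₀ + 1), lam μ ^ j) * cseq μ) ^ 2 with hB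
  have hS0 : ∀ μ, (0:ℝ) ≤ ∑ j ∈ Finset.range (k₀ + 1), lam μ ^ j := fun μ =>
    Finset.sum_nonneg fun j _ => pow_nonneg (le_trans zero_le_one (h1 μ)) j
  have hBeq : ∀ μ, B μ = lam μ ^ k * (∑ j ∈ Finset.range (k₀ + 1), lam μ ^ j) * cseq μ ^ 2 := by
    intro μ
    simp only [hB, mul_pow, Real.sq_sqrt (hS0 μ)]
    ring
  have hlam0 : ∀ μ, (0:ℝ) ≤ lam μ := fun μ => le_trans zero_le_one (h1 μ)
  have hAnn : ∀ μ, 0 ≤ A μ := fun μ => mul_nonneg (Finset.sum_nonneg fun j _ =>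
    pow_nonneg (hlam0 μ) j) (sq_nonneg _)
  have hBnn : ∀ μ, 0 ≤ B μ := fun μ => mul_nonneg (pow_nonneg (hlam0 μ) k) (sq_nonneg _)
  -- pointwise bounds
  have hpowle : ∀ μ, ∀ j ≤ k + k₀, lam μ ^ j ≤ lam μ ^ (k + k₀) := fun μ j hj =>
    pow_le_pow_right₀ (h1 μ) hj
  have htop_le_B : ∀ μ, lam μ ^ (k + k₀) * cseq μ ^ 2 ≤ B μ := by
    intro μ
    rw [hBeq μ, pow_add]
    have : lam μ ^ k₀ ≤ ∑ j ∈ Finset.range (k₀ + 1), lam μ ^ j :=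
      Finset.single_le_sum (f := fun j => lam μ ^ j)
        (fun j _ => pow_nonneg (hlam0 μ) j) (Finset.self_mem_range_succ k₀)
    have h2 := mul_le_mul_of_nonneg_left this (pow_nonneg (hlam0 μ) k)
    exact mul_le_mul_of_nonneg_right h2 (sq_nonneg _)
  have htop_le_A : ∀ μ, lam μ ^ (k + k₀) * cseq μ ^ 2 ≤ A μ := by
    intro μ
    have : lam μ ^ (k + k₀) ≤ ∑ j ∈ Finset.range (k + k₀ + 1), lam μ ^ j :=
      Finset.single_le_sum (f := fun j => lam μ ^ j)
        (fun j _ => pow_nonneg (hlam0 μ) j) (Finset.self_mem_range_succ (k + k₀))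
    exact mul_le_mul_of_nonneg_right this (sq_nonneg _)
  have hkey1 : ∀ μ, A μ ≤ C * B μ := by
    intro μ
    have hsum : (∑ j ∈ Finset.range (k + k₀ + 1), lam μ ^ j) ≤ C * lam μ ^ (k + k₀) := by
      calc (∑ j ∈ Finset.range (k + k₀ + 1), lam μ ^ j)
          ≤ ∑ _j ∈ Finset.range (k + k₀ + 1), lam μ ^ (k + k₀) :=
            Finset.sum_le_sum fun j hj => hpowle μ j (Nat.lt_succ_iff.mp (Finset.mem_range.mp hj))
        _ = C * lam μ ^ (k + k₀) := by
            simp [hCdef, Finset.sum_const, Finset.card_range]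
    calc A μ ≤ C * lam μ ^ (k + k₀) * cseq μ ^ 2 :=
          mul_le_mul_of_nonneg_right hsum (sq_nonneg _)
      _ = C * (lam μ ^ (k + k₀) * cseq μ ^ 2) := by ring
      _ ≤ C * B μ := mul_le_mul_of_nonneg_left (htop_le_B μ) hC.le
  have hkey2 : ∀ μ, B μ ≤ C * A μ := by
    intro μ
    have hsum0 : (∑ j ∈ Finset.range (k₀ + 1), lam μ ^ j) ≤ C * lam μ ^ k₀ := by
      calc (∑ j ∈ Finset.range (k₀ + 1), lam μ ^ j)
          ≤ ∑ _j ∈ Finset.range (k₀ + 1), lam μ ^ k₀ :=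
            Finset.sum_le_sum fun j hj => pow_le_pow_right₀ (h1 μ)
              (Nat.lt_succ_iff.mp (Finset.mem_range.mp hj))
        _ = ((k₀ : ℝ) + 1) * lam μ ^ k₀ := by
            simp [Finset.sum_const, Finset.card_range]
        _ ≤ C * lam μ ^ k₀ := by
            have : ((k₀ : ℝ) + 1) ≤ C := by
              simp only [hCdef]; push_cast; linarith [Nat.cast_nonneg (α := ℝ) k]
            exact mul_le_mul_of_nonneg_right this (pow_nonneg (hlam0 μ) k₀)
    calc B μ = lam μ ^ k * (∑ j ∈ Finset.range (k₀ + 1), lam μ ^ j) * cseq μ ^ 2 := hBeq μ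
      _ ≤ lam μ ^ k * (C * lam μ ^ k₀) * cseq μ ^ 2 := by
          have := mul_le_mul_of_nonneg_left hsum0 (pow_nonneg (hlam0 μ) k)
          exact mul_le_mul_of_nonneg_right this (sq_nonneg _)
      _ = C * (lam μ ^ (k + k₀) * cseq μ ^ 2) := by rw [pow_add]; ring
      _ ≤ C * A μ := mul_le_mul_of_nonneg_left (htop_le_A μ) hC.le
  have hiff : Summable A ↔ Summable B := by
    constructor
    · intro h
      exact Summable.of_nonneg_of_le hBnn hkey2 (h.mul_left C)
    · intro h
      exact Summable.of_nonneg_of_le hAnn hkey1 (h.mul_left C)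
  refine ⟨hiff, fun hSA => ?_⟩
  have hSB : Summable B := hiff.mp hSA
  constructor
  · rw [one_div, inv_mul_le_iff₀ hC]
    calc (∑' μ, A μ) ≤ ∑' μ, C * B μ := Summable.tsum_le_tsum hkey1 hSA (hSB.mul_left C)
      _ = C * ∑' μ, B μ := tsum_mul_left
  · calc (∑' μ, B μ) ≤ ∑' μ, C * A μ := Summable.tsum_le_tsum hkey2 hSB (hSA.mul_left C)
      _ = C * ∑' μ, A μ := tsum_mul_left
end
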